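/- Let V, W be finite-dimensional vector spaces, ρ : W → V linear with dual ρ* : V* → W*, and let π ∈ V ⊗ Λ^{k−1}W ⊆ Λ^k(V ⊕ W) satisfy the ρ-compatibility condition ι_{ρ*ξ} ι_η π = −ι_{ρ*η} ι_ξ π for all ξ, η ∈ V*. Then for every τ ∈ Λ^k W of the form π = D_ρ τ (where D_ρ is the derivation with D_ρ(X,u)=(ρ(u),0)), the compatibility holds automatically: ι_{ρ*ξ} ι_ξ (D_ρ τ) = 0 for all ξ ∈ V*. That is, every tensor of the form D_ρ τ is ρ-compatible. -/

import Mathlib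

open ExteriorAlgebra

/-- The subspace `(Λ^p V) ⊗ (Λ^q W) ⊆ Λ^{p+q}(V ⊕ W)`. -/
noncomputable def mixedPiece (V W : Type*) [AddCommGroup V] [Module ℝ V]
    [AddCommGroup W] [Module ℝ W] (p q : ℕ) :
    Submodule ℝ (ExteriorAlgebra ℝ (V × W)) :=
  Submodule.span ℝ { z | ∃ (X : Fin p → V) (u : Fin q → W),
    z = (List.ofFn fun i => ExteriorAlgebra.ι ℝ ((X i, (0 : W)) : V × W)).prod *
        (List.ofFn fun j => ExteriorAlgebra.ι ℝ (((0 : V), u j) : V × W)).prod }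

set_option maxHeartbeats 1000000 in
/-- every tensor of the form `π = D_ρ τ`, `τ ∈ Λ^k W`, is
ρ-compatible: `ι_{ρ*ξ} ι_ξ (D_ρ τ) = 0`, and more generally
`ι_{ρ*ξ} ι_η (D_ρτ) = −ι_{ρ*η} ι_ξ (D_ρτ)`, for all `ξ, η ∈ V*`.  Here `D_ρ` is the
derivation with `D_ρ(X,u) = (ρ(u),0)` and `c` is the interior product (contraction)
by covectors on `Λ•(V ⊕ W)`; `ι_ξ` contracts `V`-slots (covector `ξ∘pr₁`) and
`ι_{ρ*ξ}` contracts `W`-slots (covector `ξ∘ρ∘pr₂`). -/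
theorem exact_tensor_is_compatible (V W : Type*) [AddCommGroup V] [Module ℝ V]
    [AddCommGroup W] [Module ℝ W] [FiniteDimensional ℝ V] [FiniteDimensional ℝ W]
    (ρ : W →ₗ[ℝ] V)
    (D : Module.End ℝ (ExteriorAlgebra ℝ (V × W)))
    (hDder : ∀ a b : ExteriorAlgebra ℝ (V × W), D (a * b) = D a * b + a * D b)
    (hDgen : ∀ (X : V) (u : W),
      D (ExteriorAlgebra.ι ℝ ((X, u) : V × W)) = ExteriorAlgebra.ι ℝ ((ρ u, (0 : W)) : V × W))
    (c : ((V × W) →ₗ[ℝ] ℝ) → Module.End ℝ (ExteriorAlgebra ℝ (V × W)))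
    (hcone : ∀ θ, c θ 1 = 0)
    (hcmul : ∀ θ (m : V × W) (x : ExteriorAlgebra ℝ (V × W)),
      c θ (ExteriorAlgebra.ι ℝ m * x) = θ m • x - ExteriorAlgebra.ι ℝ m * c θ x)
    (k : ℕ) (τ : ExteriorAlgebra ℝ (V × W)) (hτ : τ ∈ mixedPiece V W 0 k) :
    (∀ ξ : V →ₗ[ℝ] ℝ,
      c (ξ ∘ₗ ρ ∘ₗ LinearMap.snd ℝ V W) (c (ξ ∘ₗ LinearMap.fst ℝ V W) (D τ)) = 0) ∧
    (∀ ξ η : V →ₗ[ℝ] ℝ,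
      c (ξ ∘ₗ ρ ∘ₗ LinearMap.snd ℝ V W) (c (η ∘ₗ LinearMap.fst ℝ V W) (D τ))
        = - c (η ∘ₗ ρ ∘ₗ LinearMap.snd ℝ V W) (c (ξ ∘ₗ LinearMap.fst ℝ V W) (D τ))) := by
  -- D kills 1
  have hD1 : D 1 = 0 := by
    have h := hDder 1 1
    simp only [one_mul, mul_one] at h
    exact (left_eq_add.mp h)
  -- Lemma A: contraction kills a product of ι's of vectors annihilated by θ
  have hkill : ∀ (θ : (V × W) →ₗ[ℝ] ℝ) (l : List (V × W)), (∀ m ∈ l, θ m = 0) →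
      c θ ((l.map (ExteriorAlgebra.ι ℝ)).prod) = 0 := by
    intro θ l
    induction l with
    | nil => intro _; simpa using hcone θ
    | cons m l ih =>
      intro h
      have hm : θ m = 0 := h m List.mem_cons_self
      have ht : ∀ m' ∈ l, θ m' = 0 := fun m' hm' => h m' (List.mem_cons_of_mem m hm')
      simp [hcmul, hm, ih ht]
  -- Lemma B: two contractions anticommute on products of ι's
  have hanti : ∀ (θ θ' : (V × W) →ₗ[ℝ] ℝ) (l : List (V × W)),
      c θ (c θ' ((l.map (ExteriorAlgebra.ι ℝ)).prod))
        = - c θ' (c θ ((l.map (ExteriorAlgebra.ι ℝ)).prod)) := by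
    intro θ θ' l
    induction l with
    | nil => simp [hcone]
    | cons m l ih =>
      simp only [List.map_cons, List.prod_cons]
      rw [hcmul θ' m, hcmul θ m, map_sub, map_sub, map_smul, map_smul, hcmul θ m, hcmul θ' m, ih]
      rw [mul_neg]
      module
  -- Lemma C: c (ξ∘fst) (D P) = c (ξ∘ρ∘snd) P for P a product of ι(0,u)'s
  have hC : ∀ (ξ : V →ₗ[ℝ] ℝ) (l : List W),
      c (ξ ∘ₗ LinearMap.fst ℝ V W)
          (D ((l.map (fun u => ExteriorAlgebra.ι ℝ (((0 : V), u) : V × W))).prod))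
        = c (ξ ∘ₗ ρ ∘ₗ LinearMap.snd ℝ V W)
          ((l.map (fun u => ExteriorAlgebra.ι ℝ (((0 : V), u) : V × W))).prod) := by
    intro ξ l
    induction l with
    | nil => simp [hD1, hcone, map_zero]
    | cons u l ih =>
      have hkl : c (ξ ∘ₗ LinearMap.fst ℝ V W)
          ((l.map (fun u => ExteriorAlgebra.ι ℝ (((0 : V), u) : V × W))).prod) = 0 := by
        have := hkill (ξ ∘ₗ LinearMap.fst ℝ V W)
          (l.map (fun u => (((0 : V), u) : V × W))) (by
            intro m hm
            simp only [List.mem_map] at hm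
            obtain ⟨u', _, rfl⟩ := hm
            simp)
        simpa [List.map_map, Function.comp_def] using this
      simp only [List.map_cons, List.prod_cons]
      rw [hDder, hDgen, map_add, hcmul, hcmul, hcmul, hkl]
      simp only [LinearMap.comp_apply, LinearMap.fst_apply, LinearMap.snd_apply, map_zero,
        zero_smul, zero_sub, mul_zero, neg_zero, add_zero, ih]
      rw [sub_zero, sub_eq_add_neg]
  unfold mixedPiece at hτ
  -- the two key facts about τ, by span induction
  have key : ∀ (ξ : V →ₗ[ℝ] ℝ),
      c (ξ ∘ₗ LinearMap.fst ℝ V W) (D τ) = c (ξ ∘ₗ ρ ∘ₗ LinearMap.snd ℝ V W) τ := by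
    intro ξ
    refine Submodule.span_induction (p := fun x _ =>
      c (ξ ∘ₗ LinearMap.fst ℝ V W) (D x) = c (ξ ∘ₗ ρ ∘ₗ LinearMap.snd ℝ V W) x)
      ?_ (by simp) (fun x y _ _ hx hy => by simp [map_add, hx, hy])
      (fun a x _ hx => by simp [map_smul, hx]) hτ
    rintro z ⟨X, u, rfl⟩
    have h0 : (List.ofFn fun i : Fin 0 => ExteriorAlgebra.ι ℝ ((X i, (0 : W)) : V × W)).prod
        = 1 := by simp
    rw [h0, one_mul]
    have hfn : (List.ofFn fun j => ExteriorAlgebra.ι ℝ (((0 : V), u j) : V × W))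
        = (List.ofFn u).map (fun w => ExteriorAlgebra.ι ℝ (((0 : V), w) : V × W)) :=
      by rw [List.map_ofFn]; rfl
    rw [hfn]
    exact hC ξ (List.ofFn u)
  have keyanti : ∀ (θ θ' : (V × W) →ₗ[ℝ] ℝ), c θ (c θ' τ) = - c θ' (c θ τ) := by
    intro θ θ'
    refine Submodule.span_induction (p := fun x _ => c θ (c θ' x) = - c θ' (c θ x))
      ?_ (by simp) (fun x y _ _ hx hy => by simp only [map_add, hx, hy]; abel)
      (fun a x _ hx => by simp [map_smul, hx]) hτ
    rintro z ⟨X, u, rfl⟩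
    have h0 : (List.ofFn fun i : Fin 0 => ExteriorAlgebra.ι ℝ ((X i, (0 : W)) : V × W)).prod
        = 1 := by simp
    rw [h0, one_mul]
    have hfn : (List.ofFn fun j => ExteriorAlgebra.ι ℝ (((0 : V), u j) : V × W))
        = (List.ofFn (fun j => (((0 : V), u j) : V × W))).map (ExteriorAlgebra.ι ℝ) :=
      by rw [List.map_ofFn]; rfl
    rw [hfn]
    exact hanti θ θ' _
  have main : ∀ ξ η : V →ₗ[ℝ] ℝ,
      c (ξ ∘ₗ ρ ∘ₗ LinearMap.snd ℝ V W) (c (η ∘ₗ LinearMap.fst ℝ V W) (D τ))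
        = - c (η ∘ₗ ρ ∘ₗ LinearMap.snd ℝ V W) (c (ξ ∘ₗ LinearMap.fst ℝ V W) (D τ)) := by
    intro ξ η
    rw [key η, key ξ, keyanti]
  refine ⟨fun ξ => ?_, main⟩
  have h := main ξ ξ
  have h2 : c (ξ ∘ₗ ρ ∘ₗ LinearMap.snd ℝ V W) (c (ξ ∘ₗ LinearMap.fst ℝ V W) (D τ))
      + c (ξ ∘ₗ ρ ∘ₗ LinearMap.snd ℝ V W) (c (ξ ∘ₗ LinearMap.fst ℝ V W) (D τ)) = 0 :=
    eq_neg_iff_add_eq_zero.mp h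
  have h3 : (2 : ℝ) • c (ξ ∘ₗ ρ ∘ₗ LinearMap.snd ℝ V W)
      (c (ξ ∘ₗ LinearMap.fst ℝ V W) (D τ)) = 0 := by
    rw [two_smul]; exact h2
  have h4 := congrArg (fun y => ((2:ℝ)⁻¹) • y) h3
  simpa [smul_smul] using h4
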